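/- arXiv:2401.15014 — 3 statements merged into one kernel-verified Lean document; each statement's English description precedes it below -/
import Mathlib

section
/- Let λ > 0 be a random variable with density π(λ), and let β be a random variable whose conditional distribution given λ is normal with mean 0 and variance λ. Then the marginal density of β is heavy-tailed if and only if π(λ) is heavy-tailed, where a density p on ℝ (resp. on (0,∞)) is heavy-tailed if ∫ p(x) e^{tx} dx = ∞ for all t > 0. -/
open MeasureTheory Set Filter Real

lemma sqrt_le_exp' (x : ℝ) : Real.sqrt x ≤ Real.exp x := by
  rcases le_total x 0 with h | h
  · calc Real.sqrt x = 0 := Real.sqrt_eq_zero_of_nonpos h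
      _ ≤ Real.exp x := (Real.exp_pos x).le
  · rcases le_total x 1 with h1 | h1
    · calc Real.sqrt x ≤ Real.sqrt 1 := Real.sqrt_le_sqrt h1
        _ = 1 := Real.sqrt_one
        _ ≤ Real.exp x := Real.one_le_exp h
    · have hs := Real.sq_sqrt h
      have := Real.sqrt_nonneg x
      nlinarith [Real.add_one_le_exp x]

lemma key_mgf (pdf : ℝ → ℝ)
    (hpdf_nonneg : ∀ l, 0 ≤ pdf l)
    (hpdf_meas : Measurable pdf)
    (hpdf_int : ∫⁻ l in Ioi (0 : ℝ), ENNReal.ofReal (pdf l) = 1)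
    (pdfβ : ℝ → ℝ)
    (hpdfβ : ∀ b, pdfβ b =
      ∫ l in Ioi (0 : ℝ),
        (2 * Real.pi * l) ^ (-(1:ℝ)/2) * Real.exp (-(b ^ 2) / (2 * l)) * pdf l)
    (t : ℝ) :
    ∫⁻ b : ℝ, ENNReal.ofReal (pdfβ b * Real.exp (t * b)) =
      ∫⁻ l in Ioi (0 : ℝ), ENNReal.ofReal (pdf l * Real.exp (l * t ^ 2 / 2)) := by
  have hπ : (0:ℝ) < 2 * π := by positivity
  set g : ℝ → ℝ → ℝ :=
    fun b l => (Real.sqrt (2 * π * l))⁻¹ * Real.exp (-(b ^ 2) / (2 * l)) * pdf l with hg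
  -- pdfβ in terms of g
  have hpdfβ' : ∀ b, pdfβ b = ∫ l in Ioi (0:ℝ), g b l := by
    intro b
    rw [hpdfβ b]
    apply setIntegral_congr_fun measurableSet_Ioi
    intro l hl
    have hl' : (0:ℝ) < l := hl
    have h1 : (2 * π * l) ^ (-(1:ℝ)/2) = (Real.sqrt (2 * π * l))⁻¹ := by
      rw [Real.sqrt_eq_rpow, ← Real.rpow_neg (by positivity)]
      norm_num
    dsimp only
    rw [h1]
  -- pdf is integrable on Ioi 0
  have hpdfInt : IntegrableOn pdf (Ioi (0:ℝ)) := by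
    refine ⟨hpdf_meas.aestronglyMeasurable, ?_⟩
    rw [hasFiniteIntegral_iff_ofReal (ae_of_all _ hpdf_nonneg), hpdf_int]
    exact ENNReal.one_lt_top
  -- g is nonneg on Ioi 0
  have hg_nonneg : ∀ b l, 0 ≤ g b l := by
    intro b l
    apply mul_nonneg (mul_nonneg _ (Real.exp_pos _).le) (hpdf_nonneg l)
    positivity
  -- bound and integrability of g b for b ≠ 0
  have hbound : ∀ b : ℝ, b ≠ 0 → ∀ l ∈ Ioi (0:ℝ),
      g b l ≤ ((Real.sqrt (2*π))⁻¹ * (Real.sqrt 2 / |b|)) * pdf l := by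
    intro b hb l hl
    have hl' : (0:ℝ) < l := hl
    have hb' : (0:ℝ) < |b| := abs_pos.mpr hb
    have hx : (0:ℝ) < b ^ 2 / (2 * l) := by positivity
    have hsl : (0:ℝ) < Real.sqrt l := Real.sqrt_pos.mpr hl'
    have h2 : Real.exp (-(b ^ 2) / (2 * l)) ≤ Real.sqrt (2 * l) / |b| := by
      have h3 : Real.sqrt (b ^ 2 / (2 * l)) ≤ Real.exp (b ^ 2 / (2 * l)) := sqrt_le_exp' _
      have h4 : Real.sqrt (b ^ 2 / (2 * l)) = |b| / Real.sqrt (2 * l) := by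
        rw [Real.sqrt_div (sq_nonneg b), Real.sqrt_sq_eq_abs]
      rw [h4] at h3
      have h5 : (0:ℝ) < Real.sqrt (2 * l) := Real.sqrt_pos.mpr (by linarith)
      have h6 : Real.exp (-(b ^ 2) / (2 * l)) = (Real.exp (b ^ 2 / (2 * l)))⁻¹ := by
        rw [← Real.exp_neg]; ring_nf
      rw [h6]
      have h7 : (Real.exp (b ^ 2 / (2 * l)))⁻¹ ≤ (|b| / Real.sqrt (2 * l))⁻¹ := by
        apply inv_anti₀ (by positivity) h3
      simpa [inv_div] using h7
    have h7 : (Real.sqrt (2 * π * l))⁻¹ * Real.exp (-(b ^ 2) / (2 * l))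
        ≤ (Real.sqrt (2*π))⁻¹ * (Real.sqrt 2 / |b|) := by
      have h8 : Real.sqrt (2 * π * l) = Real.sqrt (2 * π) * Real.sqrt l :=
        Real.sqrt_mul hπ.le l
      have h9 : Real.sqrt (2 * l) = Real.sqrt 2 * Real.sqrt l :=
        Real.sqrt_mul (by norm_num) l
      have hsp : (0:ℝ) < Real.sqrt (2 * π) := Real.sqrt_pos.mpr hπ
      calc (Real.sqrt (2 * π * l))⁻¹ * Real.exp (-(b ^ 2) / (2 * l))
          ≤ (Real.sqrt (2 * π * l))⁻¹ * (Real.sqrt (2 * l) / |b|) := by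
            apply mul_le_mul_of_nonneg_left h2 (by positivity)
        _ = (Real.sqrt (2*π))⁻¹ * (Real.sqrt 2 / |b|) := by
            rw [h8, h9]
            field_simp
    exact mul_le_mul_of_nonneg_right h7 (hpdf_nonneg l)
  have hgmeas : ∀ b, Measurable (g b) := by
    intro b
    apply Measurable.mul _ hpdf_meas
    apply Measurable.mul
    · exact (Real.continuous_sqrt.measurable.comp (by fun_prop)).inv
    · exact Real.measurable_exp.comp (by fun_prop)
  have hInt : ∀ b : ℝ, b ≠ 0 → IntegrableOn (g b) (Ioi (0:ℝ)) := by
    intro b hb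
    apply Integrable.mono' (hpdfInt.const_mul ((Real.sqrt (2*π))⁻¹ * (Real.sqrt 2 / |b|)))
      (hgmeas b).aestronglyMeasurable
    filter_upwards [ae_restrict_mem measurableSet_Ioi] with l hl
    rw [Real.norm_eq_abs, abs_of_nonneg (hg_nonneg b l)]
    exact hbound b hb l hl
  -- main a.e. identity
  have h0 : ∀ᵐ (b : ℝ), b ≠ 0 := by
    rw [ae_iff]
    convert Real.volume_singleton (a := 0) using 2
    ext b; simp
  have step1 : ∫⁻ b : ℝ, ENNReal.ofReal (pdfβ b * Real.exp (t * b)) =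
      ∫⁻ b : ℝ, ∫⁻ l in Ioi (0:ℝ), ENNReal.ofReal (g b l * Real.exp (t * b)) := by
    apply lintegral_congr_ae
    filter_upwards [h0] with b hb
    have h1 : pdfβ b * Real.exp (t * b) = ∫ l in Ioi (0:ℝ), g b l * Real.exp (t * b) := by
      rw [hpdfβ' b, ← integral_mul_const]
    rw [h1, ofReal_integral_eq_lintegral_ofReal ((hInt b hb).mul_const _)
      (ae_of_all _ fun l => mul_nonneg (hg_nonneg b l) (Real.exp_pos _).le)]
  rw [step1]
  have hmeas2 : Measurable (Function.uncurry
      (fun b l => ENNReal.ofReal (g b l * Real.exp (t * b)))) := by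
    apply Measurable.ennreal_ofReal
    apply Measurable.mul
    · apply Measurable.mul
      · apply Measurable.mul
        · exact (Real.continuous_sqrt.measurable.comp (by fun_prop)).inv
        · exact Real.measurable_exp.comp (by fun_prop)
      · exact hpdf_meas.comp measurable_snd
    · exact Real.measurable_exp.comp (by fun_prop)
  rw [lintegral_lintegral_swap hmeas2.aemeasurable]
  apply setLIntegral_congr_fun measurableSet_Ioi
  intro l hl
  have hl' : (0:ℝ) < l := hl
  have hv : l.toNNReal ≠ 0 := by
    simp only [ne_eq, Real.toNNReal_eq_zero, not_le]
    exact hl'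
  have hrw : ∀ b, g b l * Real.exp (t * b) =
      (pdf l * Real.exp (l * t ^ 2 / 2)) *
        ProbabilityTheory.gaussianPDFReal (t * l) l.toNNReal b := by
    intro b
    simp only [ProbabilityTheory.gaussianPDFReal, Real.coe_toNNReal l hl'.le]
    have h2 : Real.exp (-(b ^ 2) / (2 * l)) * Real.exp (t * b) =
        Real.exp (l * t ^ 2 / 2) * Real.exp (-(b - t * l) ^ 2 / (2 * l)) := by
      rw [← Real.exp_add, ← Real.exp_add]
      congr 1
      field_simp
      ring
    calc g b l * Real.exp (t * b)
        = (Real.sqrt (2 * π * l))⁻¹ *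
            (Real.exp (-(b ^ 2) / (2 * l)) * Real.exp (t * b)) * pdf l := by
          rw [hg]; ring
      _ = (pdf l * Real.exp (l * t ^ 2 / 2)) *
            ((Real.sqrt (2 * π * l))⁻¹ * Real.exp (-(b - t * l) ^ 2 / (2 * l))) := by
          rw [h2]; ring
  simp_rw [hrw]
  have hc : 0 ≤ pdf l * Real.exp (l * t ^ 2 / 2) :=
    mul_nonneg (hpdf_nonneg l) (Real.exp_pos _).le
  simp_rw [ENNReal.ofReal_mul hc]
  rw [lintegral_const_mul _ ((ProbabilityTheory.measurable_gaussianPDFReal _ _).ennreal_ofReal),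
    ProbabilityTheory.lintegral_gaussianPDFReal_eq_one _ hv, mul_one]

/-- A scale mixture of centered normals
`pdfβ b = ∫₀^∞ (2pdfλ)^{-1/2} exp(-b²/(2λ)) pdf λ dλ`
is heavy-tailed iff the mixing density `pdf` is heavy-tailed. -/
theorem scaleMixture_heavyTailed_iff
    (pdf : ℝ → ℝ)
    (hpdf_nonneg : ∀ l, 0 ≤ pdf l)
    (hpdf_meas : Measurable pdf)
    (hpdf_int : ∫⁻ l in Ioi (0 : ℝ), ENNReal.ofReal (pdf l) = 1)
    (pdfβ : ℝ → ℝ)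
    (hpdfβ : ∀ b, pdfβ b =
      ∫ l in Ioi (0 : ℝ),
        (2 * Real.pi * l) ^ (-(1:ℝ)/2) * Real.exp (-(b ^ 2) / (2 * l)) * pdf l) :
    (∀ t > (0 : ℝ), ∫⁻ b : ℝ, ENNReal.ofReal (pdfβ b * Real.exp (t * b)) = ⊤)
      ↔ (∀ t > (0 : ℝ),
          ∫⁻ l in Ioi (0 : ℝ), ENNReal.ofReal (pdf l * Real.exp (t * l)) = ⊤) := by
  constructor
  · intro H t ht
    have hs : (0:ℝ) < Real.sqrt (2 * t) := Real.sqrt_pos.mpr (by linarith)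
    have h1 := H _ hs
    rw [key_mgf pdf hpdf_nonneg hpdf_meas hpdf_int pdfβ hpdfβ _] at h1
    have he : ∀ l : ℝ, l * Real.sqrt (2 * t) ^ 2 / 2 = t * l := by
      intro l
      rw [Real.sq_sqrt (by linarith)]
      ring
    simpa only [he] using h1
  · intro H t ht
    rw [key_mgf pdf hpdf_nonneg hpdf_meas hpdf_int pdfβ hpdfβ t]
    have he : ∀ l : ℝ, l * t ^ 2 / 2 = (t ^ 2 / 2) * l := fun l => by ring
    simp only [he]
    exact H _ (by positivity)
end

section
/- Let D_ref be a p×p symmetric positive semidefinite matrix, N > 0, and β_sum ∈ ℝᵖ. For σ₀ > 0 define μ̂(σ₀) = (N·D_ref + σ₀^{-2} I)^{-1} N β_sum (the posterior mean under the Gaussian prior N(0, σ₀² I) with likelihood β_sum | β ~ N(D_ref β, D_ref/N)). If there exists an eigenvector v of D_ref with eigenvalue 0 such that ⟨v, β_sum⟩ ≠ 0, then ‖μ̂(σ₀)‖ → ∞ as σ₀ → ∞. In fact ‖μ̂(σ₀)‖ ≥ N σ₀² |⟨v, β_sum⟩| for unit v. -/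
open Matrix Filter Real

lemma key_ineq
    (p : ℕ) (Dref : Matrix (Fin p) (Fin p) ℝ) (hD : Dref.PosSemidef)
    (N : ℝ) (hN : 0 < N) (βsum v : Fin p → ℝ)
    (hv_unit : v ⬝ᵥ v = 1)
    (hv_null : Dref *ᵥ v = 0)
    (μ : ℝ → Fin p → ℝ)
    (hμ : ∀ σ₀ : ℝ, μ σ₀ = (N • Dref + σ₀ ^ (-2 : ℤ) • (1 : Matrix (Fin p) (Fin p) ℝ))⁻¹ *ᵥ (N • βsum))
    (σ₀ : ℝ) (hσ : 0 < σ₀) :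
    N * σ₀ ^ 2 * |v ⬝ᵥ βsum| ≤ Real.sqrt (μ σ₀ ⬝ᵥ μ σ₀) := by
  set A : Matrix (Fin p) (Fin p) ℝ := N • Dref + σ₀ ^ (-2 : ℤ) • (1 : Matrix (Fin p) (Fin p) ℝ) with hA
  have hσ2 : (0:ℝ) < σ₀ ^ (-2 : ℤ) := by positivity
  have hDsymm : Drefᵀ = Dref := by
    ext i j; simpa using congrFun (congrFun hD.1 i) j
  have hApos : A.PosDef := by
    refine Matrix.PosDef.of_dotProduct_mulVec_pos ?_ fun x hx => ?_
    · show Aᴴ = A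
      ext i j
      simp [hA, Matrix.conjTranspose_apply, Matrix.one_apply, mul_comm]
      rcases eq_or_ne i j with h | h
      · simp [h]
      · have := congrFun (congrFun hDsymm i) j
        simp [Matrix.transpose_apply] at this
        simp [h, Ne.symm h, this]
    · simp only [hA, Matrix.add_mulVec, dotProduct_add,
        Matrix.smul_mulVec, dotProduct_smul, Matrix.one_mulVec]
      have h1 : (0:ℝ) ≤ star x ⬝ᵥ Dref *ᵥ x := hD.dotProduct_mulVec_nonneg x
      have h2 : (0:ℝ) < star x ⬝ᵥ x := Matrix.dotProduct_star_self_pos_iff.2 hx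
      have : (0:ℝ) ≤ N * (star x ⬝ᵥ Dref *ᵥ x) := mul_nonneg hN.le h1
      have : (0:ℝ) < σ₀ ^ (-2:ℤ) * (star x ⬝ᵥ x) := mul_pos hσ2 h2
      simp only [smul_eq_mul]
      linarith
  have hunit : IsUnit A.det := by
    simp [isUnit_iff_ne_zero, ne_of_gt hApos.det_pos]
  have hAinv : A * A⁻¹ = 1 := Matrix.mul_nonsing_inv A hunit
  have hAsymm : Aᵀ = A := by
    simp [hA, Matrix.transpose_add, Matrix.transpose_smul, hDsymm]
  have hAv : A *ᵥ v = σ₀ ^ (-2 : ℤ) • v := by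
    simp [hA, Matrix.add_mulVec, Matrix.smul_mulVec, hv_null]
  have hAμ : A *ᵥ μ σ₀ = N • βsum := by
    rw [hμ, Matrix.mulVec_mulVec, hAinv, Matrix.one_mulVec]
  have hkey : σ₀ ^ (-2:ℤ) * (v ⬝ᵥ μ σ₀) = N * (v ⬝ᵥ βsum) := by
    have h1 : (A *ᵥ v) ⬝ᵥ μ σ₀ = v ⬝ᵥ (A *ᵥ μ σ₀) := by
      rw [Matrix.dotProduct_mulVec, ← hAsymm, Matrix.vecMul_transpose, hAsymm]
    rw [hAv, hAμ] at h1
    simpa [smul_dotProduct, dotProduct_smul] using h1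
  have hσ2pow : σ₀ ^ (-2:ℤ) = (σ₀ ^ 2)⁻¹ := by
    rw [_root_.zpow_neg]; norm_cast
  have hvμ : v ⬝ᵥ μ σ₀ = σ₀ ^ 2 * (N * (v ⬝ᵥ βsum)) := by
    have hs : (σ₀:ℝ) ^ 2 ≠ 0 := by positivity
    rw [hσ2pow] at hkey
    have h2 : v ⬝ᵥ μ σ₀ = σ₀ ^ 2 * ((σ₀ ^ 2)⁻¹ * (v ⬝ᵥ μ σ₀)) := by
      field_simp
    rw [h2, hkey]
  have hCS : |v ⬝ᵥ μ σ₀| ≤ Real.sqrt (μ σ₀ ⬝ᵥ μ σ₀) := by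
    have hsq := Finset.sum_mul_sq_le_sq_mul_sq Finset.univ v (μ σ₀)
    have hvv' : ∑ i, v i ^ 2 = 1 := by
      have : (∑ i, v i ^ 2) = ∑ i, v i * v i := by
        simp [pow_two]
      rw [this]; exact hv_unit
    rw [hvv', one_mul] at hsq
    have h1 : (v ⬝ᵥ μ σ₀) ^ 2 ≤ μ σ₀ ⬝ᵥ μ σ₀ := by
      have e1 : v ⬝ᵥ μ σ₀ = ∑ i, v i * μ σ₀ i := rfl
      have e2 : μ σ₀ ⬝ᵥ μ σ₀ = ∑ i, μ σ₀ i ^ 2 := by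
        simp [dotProduct, pow_two]
      rw [e1, e2]; exact hsq
    calc |v ⬝ᵥ μ σ₀| = Real.sqrt ((v ⬝ᵥ μ σ₀) ^ 2) := (Real.sqrt_sq_eq_abs _).symm
      _ ≤ Real.sqrt (μ σ₀ ⬝ᵥ μ σ₀) := Real.sqrt_le_sqrt h1
  calc N * σ₀ ^ 2 * |v ⬝ᵥ βsum| = |v ⬝ᵥ μ σ₀| := by
        rw [hvμ, abs_mul, abs_mul]
        rw [abs_of_pos (by positivity : (0:ℝ) < σ₀ ^ 2), abs_of_pos hN]
        ring
    _ ≤ _ := hCS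

/-- divergence of the posterior mean under LD mismatch.
If `v` is a unit eigenvector of the PSD matrix `Dref` with eigenvalue `0` and
`⟨v, βsum⟩ ≠ 0`, then the posterior mean
`μ̂(σ₀) = (N Dref + σ₀⁻² I)⁻¹ (N βsum)` satisfies
`‖μ̂(σ₀)‖ ≥ N σ₀² |⟨v, βsum⟩|`, and in particular `‖μ̂(σ₀)‖ → ∞` as `σ₀ → ∞`. -/
theorem posterior_mean_diverges
    (p : ℕ) (Dref : Matrix (Fin p) (Fin p) ℝ) (hD : Dref.PosSemidef)
    (N : ℝ) (hN : 0 < N) (βsum v : Fin p → ℝ)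
    (hv_unit : v ⬝ᵥ v = 1)
    (hv_null : Dref *ᵥ v = 0)
    (hv_sum : v ⬝ᵥ βsum ≠ 0)
    (μ : ℝ → Fin p → ℝ)
    (hμ : ∀ σ₀ : ℝ, μ σ₀ = (N • Dref + σ₀ ^ (-2 : ℤ) • (1 : Matrix (Fin p) (Fin p) ℝ))⁻¹ *ᵥ (N • βsum)) :
    (∀ σ₀ : ℝ, 0 < σ₀ →
      N * σ₀ ^ 2 * |v ⬝ᵥ βsum| ≤ Real.sqrt (μ σ₀ ⬝ᵥ μ σ₀)) ∧
    Tendsto (fun σ₀ => Real.sqrt (μ σ₀ ⬝ᵥ μ σ₀)) atTop atTop := by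
  have hineq := key_ineq p Dref hD N hN βsum v hv_unit hv_null μ hμ
  refine ⟨hineq, ?_⟩
  have hc : (0:ℝ) < N * |v ⬝ᵥ βsum| := by positivity
  have hlow : Tendsto (fun σ₀ : ℝ => N * σ₀ ^ 2 * |v ⬝ᵥ βsum|) atTop atTop := by
    have : Tendsto (fun σ₀ : ℝ => σ₀ ^ 2) atTop atTop := tendsto_pow_atTop two_ne_zero
    have h2 := this.const_mul_atTop (by positivity : (0:ℝ) < N * |v ⬝ᵥ βsum|)
    refine h2.congr fun x => by ring
  refine tendsto_atTop_mono' atTop ?_ hlow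
  filter_upwards [eventually_gt_atTop 0] with σ₀ hσ using hineq σ₀ hσ
end

section
/- Let v ∈ ℝᵖ be a unit vector, β_sum ∈ ℝᵖ with c := ⟨v, β_sum⟩ ≠ 0, D_ref symmetric PSD with D_ref v = 0, and N_train, N_ref > 0. Then for all λ² > 0, N_train N_ref β_sumᵀ V (Δ² + λ^{-2} I)^{-1} Vᵀ β_sum ≥ N_train N_ref c² λ², where D_ref = V (Δ²/N_ref) Vᵀ is the spectral decomposition with v a column of V having eigenvalue 0. In particular the quadratic form grows at least linearly in λ². -/
open Matrix

/-- key lower bound in the improper-posterior theorem.  If `v` is the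
`k`-th column of the orthogonal eigenvector matrix `V` of
`Dref = N_ref⁻¹ V Δ² Vᵀ` with `Δ²ₖ = 0` and `c = ⟨v, βsum⟩ ≠ 0`, then for every
`λ² > 0`,
`N_train N_ref βsumᵀ V (Δ² + λ⁻² I)⁻¹ Vᵀ βsum ≥ N_train N_ref c² λ²`. -/
theorem quadratic_form_lower_bound
    (p : ℕ) (V : Matrix (Fin p) (Fin p) ℝ) (hV : Vᵀ * V = 1)
    (Δsq : Fin p → ℝ) (hΔ : ∀ l, 0 ≤ Δsq l)
    (Nref Ntrain : ℝ) (hNref : 0 < Nref) (hNtrain : 0 < Ntrain)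
    (Dref : Matrix (Fin p) (Fin p) ℝ)
    (hDref : Dref = Nref⁻¹ • (V * Matrix.diagonal Δsq * Vᵀ))
    (k : Fin p) (hk : Δsq k = 0)
    (v : Fin p → ℝ) (hv : v = fun i => V i k)
    (βsum : Fin p → ℝ) (c : ℝ) (hc : c = v ⬝ᵥ βsum) (hc0 : c ≠ 0)
    (lamsq : ℝ) (hlamsq : 0 < lamsq) :
    Ntrain * Nref * c ^ 2 * lamsq ≤
      Ntrain * Nref *
        (βsum ⬝ᵥ ((V * Matrix.diagonal (fun l => (Δsq l + lamsq⁻¹)⁻¹) * Vᵀ) *ᵥ βsum)) := by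
  set w : Fin p → ℝ := Vᵀ *ᵥ βsum with hw
  have hwk : w k = c := by
    rw [hc, hv, hw]
    simp [Matrix.mulVec, dotProduct, Matrix.transpose_apply]
  have hquad : βsum ⬝ᵥ ((V * Matrix.diagonal (fun l => (Δsq l + lamsq⁻¹)⁻¹) * Vᵀ) *ᵥ βsum)
      = ∑ l, (Δsq l + lamsq⁻¹)⁻¹ * (w l) ^ 2 := by
    rw [← Matrix.mulVec_mulVec, ← Matrix.mulVec_mulVec, Matrix.dotProduct_mulVec,
      ← Matrix.mulVec_transpose, ← hw]
    simp [dotProduct, Matrix.mulVec_diagonal]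
    exact Finset.sum_congr rfl fun l _ => by ring
  have hterm : ∀ l ∈ Finset.univ, (0:ℝ) ≤ (Δsq l + lamsq⁻¹)⁻¹ * (w l) ^ 2 := by
    intro l _
    have h1 : 0 < Δsq l + lamsq⁻¹ := by have := hΔ l; positivity
    exact mul_nonneg (inv_nonneg.mpr h1.le) (sq_nonneg _)
  have hkey : c ^ 2 * lamsq ≤ ∑ l, (Δsq l + lamsq⁻¹)⁻¹ * (w l) ^ 2 := by
    have hle := Finset.single_le_sum hterm (Finset.mem_univ k)
    have : (Δsq k + lamsq⁻¹)⁻¹ * (w k) ^ 2 = c ^ 2 * lamsq := by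
      rw [hk, hwk]; field_simp; ring
    linarith
  rw [hquad, mul_assoc, mul_assoc]
  have hpos : 0 < Ntrain * Nref := mul_pos hNtrain hNref
  have := mul_le_mul_of_nonneg_left hkey hpos.le
  linarith [this]
end
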